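/- For every natural number m, the Wallis-type partial product ∏_{k=1}^{m} (2k−1)/(2k) equals the convergent infinite product ∏_{k=0}^∞ ( (2k+1)(2m+2k+2) ) / ( (2k+2)(2m+2k+1) ). -/

import Mathlib

open Filter Finset Real Topology

noncomputable def wg (k : ℕ) : ℝ := (2 * k + 1) / (2 * k + 2)

noncomputable def wa (m : ℕ) : ℕ → ℝ := fun k : ℕ =>
  ((2 * k + 1) * (2 * m + 2 * k + 2)) / ((2 * k + 2) * (2 * m + 2 * k + 1))

lemma wg_pos (k : ℕ) : 0 < wg k := by unfold wg; positivity

lemma wa_pos (m k : ℕ) : 0 < wa m k := by unfold wa; positivity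

lemma wa_eq (m k : ℕ) : wa m k = wg k / wg (m + k) := by
  unfold wa wg
  have h1 : (2:ℝ) * k + 2 ≠ 0 := by positivity
  have h2 : (2:ℝ) * (m + k : ℕ) + 1 ≠ 0 := by positivity
  have h3 : (2:ℝ) * (m + k : ℕ) + 2 ≠ 0 := by positivity
  field_simp
  push_cast
  ring

lemma one_sub_wa (m k : ℕ) :
    1 - wa m k = 2 * m / ((2 * k + 2) * (2 * m + 2 * k + 1)) := by
  unfold wa
  have h1 : ((2:ℝ) * k + 2) * (2 * m + 2 * k + 1) ≠ 0 := by positivity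
  field_simp
  ring

lemma wa_le_one (m k : ℕ) : wa m k ≤ 1 := by
  have h := one_sub_wa m k
  have : (0:ℝ) ≤ 2 * m / ((2 * k + 2) * (2 * m + 2 * k + 1)) := by positivity
  linarith

lemma wa_ge_half (m k : ℕ) : (1:ℝ)/2 ≤ wa m k := by
  unfold wa
  rw [le_div_iff₀ (by positivity)]
  have hk : (0:ℝ) ≤ (k:ℝ) := Nat.cast_nonneg k
  have hm : (0:ℝ) ≤ (m:ℝ) := Nat.cast_nonneg m
  nlinarith

lemma wa_prod (m n : ℕ) :
    ∏ k ∈ range n, wa m k = (∏ k ∈ range m, wg k) / ∏ j ∈ range m, wg (n + j) := by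
  have key : (∏ k ∈ range n, wg k) * ∏ j ∈ range m, wg (n + j)
      = (∏ k ∈ range m, wg k) * ∏ k ∈ range n, wg (m + k) := by
    rw [← Finset.prod_range_add, ← Finset.prod_range_add, add_comm]
  have hA : (0:ℝ) < ∏ k ∈ range n, wg (m + k) :=
    Finset.prod_pos fun k _ => wg_pos _
  have hB : (0:ℝ) < ∏ j ∈ range m, wg (n + j) :=
    Finset.prod_pos fun k _ => wg_pos _
  calc ∏ k ∈ range n, wa m k
      = ∏ k ∈ range n, (wg k / wg (m + k)) := Finset.prod_congr rfl fun k _ => wa_eq m k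
    _ = (∏ k ∈ range n, wg k) / ∏ k ∈ range n, wg (m + k) := Finset.prod_div_distrib ..
    _ = (∏ k ∈ range m, wg k) / ∏ j ∈ range m, wg (n + j) := by
        rw [div_eq_div_iff hA.ne' hB.ne']
        linarith [key]

lemma wg_tendsto (j : ℕ) : Tendsto (fun n : ℕ => wg (n + j)) atTop (𝓝 1) := by
  have hlin : Tendsto (fun n : ℕ => 2 * (n:ℝ) + (2 * j + 2)) atTop atTop := by
    apply tendsto_atTop_add_const_right
    exact (tendsto_natCast_atTop_atTop (R := ℝ)).const_mul_atTop two_pos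
  have h0 : Tendsto (fun n : ℕ => (2 * (n:ℝ) + (2 * j + 2))⁻¹) atTop (𝓝 0) :=
    hlin.inv_tendsto_atTop
  have heq : ∀ n : ℕ, wg (n + j) = 1 - (2 * (n:ℝ) + (2 * j + 2))⁻¹ := by
    intro n
    unfold wg
    have h : (2:ℝ) * (n:ℝ) + (2 * j + 2) ≠ 0 := by positivity
    push_cast
    field_simp
    ring
  simp only [heq]
  simpa using tendsto_const_nhds.sub h0

lemma wa_prod_tendsto (m : ℕ) :
    Tendsto (fun n : ℕ => ∏ k ∈ range n, wa m k) atTop (𝓝 (∏ k ∈ range m, wg k)) := by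
  have h1 : Tendsto (fun n : ℕ => ∏ j ∈ range m, wg (n + j)) atTop (𝓝 1) := by
    have := tendsto_finset_prod (range m)
      (fun j (_ : j ∈ range m) => wg_tendsto j)
    simpa using this
  have := (tendsto_const_nhds (x := ∏ k ∈ range m, wg k)
    (f := (atTop : Filter ℕ))).div h1 one_ne_zero
  simp only [div_one] at this
  exact Tendsto.congr (fun n => (wa_prod m n).symm) this

lemma wa_log_summable (m : ℕ) : Summable fun k : ℕ => Real.log (wa m k) := by
  have hneg : Summable fun k : ℕ => -Real.log (wa m k) := ?_
  · simpa using hneg.neg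
  have hbase : Summable (fun k : ℕ => 1 / ((k:ℝ) + 1) ^ 2) := by
    have h := (_root_.summable_nat_add_iff (f := fun n : ℕ => 1/(n:ℝ)^2) 1).mpr
      ((Real.summable_one_div_nat_pow (p := 2)).mpr one_lt_two)
    apply h.congr
    intro k
    push_cast
    ring
  apply Summable.of_nonneg_of_le (f := fun k : ℕ => 2 * (m:ℝ) * (1 / ((k:ℝ) + 1) ^ 2))
  · intro k
    simp only [neg_nonneg]
    exact Real.log_nonpos (wa_pos m k).le (wa_le_one m k)
  · intro k
    have hpos := wa_pos m k
    have hlog : Real.log (wa m k)⁻¹ ≤ (wa m k)⁻¹ - 1 :=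
      Real.log_le_sub_one_of_pos (by positivity)
    rw [Real.log_inv] at hlog
    have hhalf := wa_ge_half m k
    have hinv : (wa m k)⁻¹ ≤ 2 := by
      rw [inv_le_comm₀ (by positivity) two_pos]
      linarith
    have h1 : -Real.log (wa m k) ≤ (1 - wa m k) / wa m k := by
      rw [sub_div, div_self hpos.ne']
      calc -Real.log (wa m k) ≤ (wa m k)⁻¹ - 1 := hlog
        _ = 1 / wa m k - 1 := by rw [one_div]
    have h2 : (1 - wa m k) / wa m k ≤ 2 * (1 - wa m k) := by
      rw [div_eq_mul_inv, mul_comm]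
      have hnn : (0:ℝ) ≤ 1 - wa m k := by linarith [wa_le_one m k]
      exact mul_le_mul_of_nonneg_right hinv hnn
    have h3 : 1 - wa m k ≤ (m:ℝ) / ((k:ℝ) + 1) ^ 2 := by
      rw [one_sub_wa]
      have hk : (0:ℝ) ≤ (k:ℝ) := Nat.cast_nonneg k
      have hm : (0:ℝ) ≤ (m:ℝ) := Nat.cast_nonneg m
      rw [div_le_div_iff₀ (by positivity) (by positivity)]
      nlinarith [mul_nonneg (mul_nonneg hm (by linarith : (0:ℝ) ≤ (k:ℝ)+1)) (by linarith : (0:ℝ) ≤ 2*(m:ℝ)+(k:ℝ))]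
    calc -Real.log (wa m k) ≤ 2 * (1 - wa m k) := h1.trans h2
      _ ≤ 2 * ((m:ℝ) / ((k:ℝ) + 1) ^ 2) := by linarith
      _ = 2 * (m:ℝ) * (1 / ((k:ℝ) + 1) ^ 2) := by ring
  · exact hbase.mul_left _

lemma wa_multipliable (m : ℕ) : Multipliable (wa m) := by
  have := Real.hasProd_of_hasSum_log (fun k => wa_pos m k) (wa_log_summable m).hasSum
  exact ⟨_, this⟩

theorem wallis_partial_eq_tprod (m : ℕ) :
    Multipliable (fun k : ℕ =>
      ((2 * k + 1) * (2 * m + 2 * k + 2)) / ((2 * k + 2) * (2 * m + 2 * k + 1)) : ℕ → ℝ) ∧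
    ∏ k ∈ Finset.Icc 1 m, ((2 * (k : ℝ) - 1) / (2 * k)) =
      ∏' k : ℕ, (((2 * k + 1) * (2 * m + 2 * k + 2)) / ((2 * k + 2) * (2 * m + 2 * k + 1)) : ℝ) := by
  have hM : Multipliable (wa m) := wa_multipliable m
  refine ⟨hM, ?_⟩
  have h1 : Tendsto (fun n : ℕ => ∏ k ∈ range n, wa m k) atTop (𝓝 (∏' k, wa m k)) :=
    hM.hasProd.tendsto_prod_nat
  have h2 := wa_prod_tendsto m
  have h3 : (∏' k, wa m k) = ∏ k ∈ range m, wg k := tendsto_nhds_unique h1 h2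
  show _ = ∏' k, wa m k
  rw [h3]
  have : Finset.Icc 1 m = Finset.Ico 1 (m + 1) := by
    rw [Finset.Ico_add_one_right_eq_Icc]
  rw [this, Finset.prod_Ico_eq_prod_range]
  simp only [Nat.add_sub_cancel]
  refine Finset.prod_congr rfl fun k _ => ?_
  unfold wg
  push_cast
  ring_nf
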